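/- Let G be an abelian group. The set of quasi-endomorphisms of G modulo the equivalence ≡ forms an associative unital ring, where addition is induced by the sum R + S of additive relations, multiplication is induced by composition of additive relations, the zero element is the class of 0_G = G × {0}, and the multiplicative identity is the class of id_G = {(g,g) : g ∈ G}. -/

import Mathlib

namespace QH

variable {G H K : Type*} [AddCommGroup G] [AddCommGroup H] [AddCommGroup K]

def dom (R : AddSubgroup (G × H)) : AddSubgroup G := R.map (AddMonoidHom.fst G H)

def img (R : AddSubgroup (G × H)) : AddSubgroup H := R.map (AddMonoidHom.snd G H)

def ker (R : AddSubgroup (G × H)) : AddSubgroup G := R.comap (AddMonoidHom.inl G H)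

def coker (R : AddSubgroup (G × H)) : AddSubgroup H := R.comap (AddMonoidHom.inr G H)

/-- The sum of two additive relations: `R + R' = {(a, b+b') : (a,b) ∈ R, (a,b') ∈ R'}`. -/
def relAdd (R R' : AddSubgroup (G × H)) : AddSubgroup (G × H) where
  carrier := {p | ∃ b b', (p.1, b) ∈ R ∧ (p.1, b') ∈ R' ∧ p.2 = b + b'}
  zero_mem' := ⟨0, 0, R.zero_mem, R'.zero_mem, by simp⟩
  add_mem' := by
    rintro ⟨a, c⟩ ⟨a', c'⟩ ⟨b, b', hb, hb', rfl⟩ ⟨d, d', hd, hd', rfl⟩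
    exact ⟨b + d, b' + d', R.add_mem hb hd, R'.add_mem hb' hd', by simp only [Prod.snd_add]; abel⟩
  neg_mem' := by
    rintro ⟨a, c⟩ ⟨b, b', hb, hb', rfl⟩
    exact ⟨-b, -b', R.neg_mem hb, R'.neg_mem hb', by simp only [Prod.snd_neg]; abel⟩

/-- The composition of additive relations. -/
def relComp (S : AddSubgroup (H × K)) (R : AddSubgroup (G × H)) : AddSubgroup (G × K) where
  carrier := {p | ∃ b, (p.1, b) ∈ R ∧ (b, p.2) ∈ S}
  zero_mem' := ⟨0, R.zero_mem, S.zero_mem⟩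
  add_mem' := by
    rintro ⟨a, c⟩ ⟨a', c'⟩ ⟨b, hb, hb'⟩ ⟨d, hd, hd'⟩
    exact ⟨b + d, R.add_mem hb hd, S.add_mem hb' hd'⟩
  neg_mem' := by
    rintro ⟨a, c⟩ ⟨b, hb, hb'⟩
    exact ⟨-b, R.neg_mem hb, S.neg_mem hb'⟩

/-- The inverse of an additive relation: `R⁻¹ = {(h,g) : (g,h) ∈ R}`. -/
def relInv (R : AddSubgroup (G × H)) : AddSubgroup (H × G) :=
  R.map ((AddMonoidHom.snd G H).prod (AddMonoidHom.fst G H))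

/-- The diagonal relation `id_D = {(d,d) : d ∈ D}` of a subgroup `D ≤ A`. -/
def relId {A : Type*} [AddCommGroup A] (D : AddSubgroup A) : AddSubgroup (A × A) :=
  D.map ((AddMonoidHom.id A).prod (AddMonoidHom.id A))


def IsQuasiHom (R : AddSubgroup (G × H)) : Prop :=
  (dom R).FiniteIndex ∧ ((coker R : Set H)).Finite

/-- Two additive relations `R, R' ≤ G × H` are equivalent if there are a finite-index
subgroup `G₁ ≤ G` and a finite subgroup `F ≤ H` with
`(R ∩ (G₁ × H)) + (G₁ × F) = (R' ∩ (G₁ × H)) + (G₁ × F)`. -/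
def relEquiv (R R' : AddSubgroup (G × H)) : Prop :=
  ∃ (G₁ : AddSubgroup G) (F : AddSubgroup H), G₁.FiniteIndex ∧ ((F : Set H)).Finite ∧
    relAdd (R ⊓ G₁.prod ⊤) (G₁.prod F) = relAdd (R' ⊓ G₁.prod ⊤) (G₁.prod F)

/-- The zero relation `0_G = G × {0}`. -/
def relZero (G : Type*) [AddCommGroup G] : AddSubgroup (G × G) :=
  (⊤ : AddSubgroup G).prod ⊥

/-- Quasi-endomorphisms of `G`. -/
def QEndo (G : Type*) [AddCommGroup G] := {R : AddSubgroup (G × G) // IsQuasiHom R}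

section Helpers

variable {G H K : Type*} [AddCommGroup G] [AddCommGroup H] [AddCommGroup K]

lemma mem_dom {R : AddSubgroup (G × H)} {a : G} : a ∈ dom R ↔ ∃ b, (a, b) ∈ R := by
  constructor
  · rintro ⟨⟨x, y⟩, hxy, rfl⟩; exact ⟨y, hxy⟩
  · rintro ⟨b, hb⟩; exact ⟨(a, b), hb, rfl⟩

lemma mem_img {R : AddSubgroup (G × H)} {b : H} : b ∈ img R ↔ ∃ a, (a, b) ∈ R := by
  constructor
  · rintro ⟨⟨x, y⟩, hxy, rfl⟩; exact ⟨x, hxy⟩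
  · rintro ⟨a, ha⟩; exact ⟨(a, b), ha, rfl⟩

lemma mem_coker {R : AddSubgroup (G × H)} {b : H} : b ∈ coker R ↔ ((0 : G), b) ∈ R :=
  Iff.rfl

lemma mem_relAdd {R R' : AddSubgroup (G × H)} {p : G × H} :
    p ∈ relAdd R R' ↔ ∃ b b', (p.1, b) ∈ R ∧ (p.1, b') ∈ R' ∧ p.2 = b + b' :=
  Iff.rfl

lemma mem_relComp {S : AddSubgroup (H × K)} {R : AddSubgroup (G × H)} {p : G × K} :
    p ∈ relComp S R ↔ ∃ b, (p.1, b) ∈ R ∧ (b, p.2) ∈ S :=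
  Iff.rfl

lemma mem_relId {D : AddSubgroup G} {p : G × G} : p ∈ relId D ↔ p.1 ∈ D ∧ p.2 = p.1 := by
  constructor
  · rintro ⟨d, hd, rfl⟩; exact ⟨hd, rfl⟩
  · rintro ⟨hd, h2⟩
    exact ⟨p.1, hd, by ext <;> simp [h2.symm]⟩

lemma mem_relZero {p : G × G} : p ∈ relZero G ↔ p.2 = 0 := by
  simp [relZero, AddSubgroup.mem_prod]

/-- The negation of a relation. -/
def relNeg (R : AddSubgroup (G × H)) : AddSubgroup (G × H) where
  carrier := {p | (p.1, -p.2) ∈ R}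
  zero_mem' := by show ((0:G), -(0:H)) ∈ R; rw [neg_zero]; exact R.zero_mem
  add_mem' := by
    rintro ⟨a, c⟩ ⟨a', c'⟩ h h'
    have := R.add_mem h h'
    simpa [neg_add, add_comm] using this
  neg_mem' := by
    rintro ⟨a, c⟩ h
    have := R.neg_mem h
    simpa using this

lemma mem_relNeg {R : AddSubgroup (G × H)} {p : G × H} : p ∈ relNeg R ↔ (p.1, -p.2) ∈ R :=
  Iff.rfl

/-- The preimage of a subgroup `V` under a relation `R`. -/
def preim (R : AddSubgroup (G × H)) (V : AddSubgroup H) : AddSubgroup G where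
  carrier := {a | ∃ b ∈ V, (a, b) ∈ R}
  zero_mem' := ⟨0, V.zero_mem, R.zero_mem⟩
  add_mem' := by
    rintro a a' ⟨b, hb, hR⟩ ⟨b', hb', hR'⟩
    exact ⟨b + b', V.add_mem hb hb', by simpa using R.add_mem hR hR'⟩
  neg_mem' := by
    rintro a ⟨b, hb, hR⟩
    exact ⟨-b, V.neg_mem hb, by simpa using R.neg_mem hR⟩

lemma mem_preim {R : AddSubgroup (G × H)} {V : AddSubgroup H} {a : G} :
    a ∈ preim R V ↔ ∃ b ∈ V, (a, b) ∈ R :=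
  Iff.rfl

lemma preim_le_dom (R : AddSubgroup (G × H)) (V : AddSubgroup H) : preim R V ≤ dom R := by
  rintro a ⟨b, _, hR⟩; exact mem_dom.mpr ⟨b, hR⟩

/-- A relation with finite domain and finite cokernel is finite. -/
lemma finite_rel_of_dom_coker {T : AddSubgroup (G × H)} (h1 : (dom T : Set G).Finite)
    (h2 : (coker T : Set H).Finite) : (T : Set (G × H)).Finite := by
  classical
  set f : G → H := fun a => if h : a ∈ dom T then Classical.choose (mem_dom.mp h) else 0 with hfdef
  have hf : ∀ a ∈ dom T, (a, f a) ∈ T := by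
    intro a ha
    simp only [hfdef, dif_pos ha]
    exact Classical.choose_spec (mem_dom.mp ha)
  haveI := h1.to_subtype
  haveI := h2.to_subtype
  rw [← Set.finite_coe_iff]
  have hdmem : ∀ p : (T : Set (G × H)), (p : G × H).1 ∈ dom T := fun p =>
    mem_dom.mpr ⟨(p : G × H).2, p.2⟩
  have hcmem : ∀ p : (T : Set (G × H)), (p : G × H).2 - f (p : G × H).1 ∈ coker T := by
    intro p
    have h1' : ((p : G × H).1, f (p : G × H).1) ∈ T := hf _ (hdmem p)
    have := T.sub_mem p.2 h1'
    rw [show ((p : G × H) - ((p : G × H).1, f (p : G × H).1)) =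
      ((0 : G), (p : G × H).2 - f (p : G × H).1) from by ext <;> simp] at this
    exact this
  refine Finite.of_injective (fun p : (T : Set (G × H)) =>
    ((⟨(p : G × H).1, hdmem p⟩ : (dom T : Set G)),
     (⟨(p : G × H).2 - f (p : G × H).1, hcmem p⟩ : (coker T : Set H)))) ?_
  rintro ⟨⟨a, b⟩, hab⟩ ⟨⟨a', b'⟩, hab'⟩ h
  simp only [Subtype.mk.injEq, Prod.mk.injEq] at h ⊢
  obtain ⟨h1', h2'⟩ := h
  refine ⟨h1', ?_⟩
  have := h2'
  rw [h1'] at this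
  exact sub_left_injective this

end Helpers
section Helpers2

variable {G H K : Type*} [AddCommGroup G] [AddCommGroup H] [AddCommGroup K]

lemma finite_img_of_dom_coker {T : AddSubgroup (G × H)} (h1 : (dom T : Set G).Finite)
    (h2 : (coker T : Set H).Finite) : (img T : Set H).Finite := by
  have : (img T : Set H) = Prod.snd '' (T : Set (G × H)) := by
    ext b
    simp only [Set.mem_image, SetLike.mem_coe, mem_img]
    constructor
    · rintro ⟨a, ha⟩; exact ⟨(a, b), ha, rfl⟩
    · rintro ⟨⟨a, b'⟩, h, rfl⟩; exact ⟨a, h⟩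
  rw [this]
  exact (finite_rel_of_dom_coker h1 h2).image _

lemma finite_sup {F₁ F₂ : AddSubgroup H} (h1 : (F₁ : Set H).Finite)
    (h2 : (F₂ : Set H).Finite) : ((F₁ ⊔ F₂ : AddSubgroup H) : Set H).Finite := by
  refine (h1.add h2).subset ?_
  intro x hx
  rcases AddSubgroup.mem_sup.mp hx with ⟨y, hy, z, hz, rfl⟩
  exact Set.add_mem_add hy hz

lemma preim_congr_sup_coker (R : AddSubgroup (G × H)) (V : AddSubgroup H) :
    preim R (V ⊔ coker R) = preim R V := by
  ext a
  simp only [mem_preim]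
  constructor
  · rintro ⟨b, hb, hR⟩
    rcases AddSubgroup.mem_sup.mp hb with ⟨v, hv, u, hu, rfl⟩
    refine ⟨v, hv, ?_⟩
    have := R.sub_mem hR (mem_coker.mp hu)
    simpa using this
  · rintro ⟨b, hb, hR⟩
    exact ⟨b, AddSubgroup.mem_sup.mpr ⟨b, hb, 0, (coker R).zero_mem, by simp⟩, hR⟩

lemma preim_finiteIndex {R : AddSubgroup (G × H)} (hd : (dom R).FiniteIndex)
    (hc : (coker R : Set H).Finite) {V : AddSubgroup H} (hV : V.FiniteIndex) :
    (preim R V).FiniteIndex := by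
  classical
  rw [← preim_congr_sup_coker R V]
  set V' : AddSubgroup H := V ⊔ coker R with hV'
  haveI : V'.FiniteIndex := AddSubgroup.finiteIndex_of_le le_sup_left
  set W : AddSubgroup G := preim R V' with hW
  have hWle : W ≤ dom R := preim_le_dom R V'
  -- choice of value
  set f : G → H := fun a => if h : a ∈ dom R then Classical.choose (mem_dom.mp h) else 0 with hfdef
  have hf : ∀ a ∈ dom R, (a, f a) ∈ R := by
    intro a ha
    simp only [hfdef, dif_pos ha]
    exact Classical.choose_spec (mem_dom.mp ha)
  -- the lifted map
  set N : AddSubgroup (dom R) := W.addSubgroupOf (dom R) with hN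
  have key : ∀ x y : (dom R), (-x + y : (dom R)).1 ∈ W ↔
      (-(f x.1) + f y.1 ∈ V') := by
    intro x y
    have hx := hf x.1 x.2
    have hy := hf y.1 y.2
    constructor
    · rintro ⟨b, hb, hR⟩
      -- (-x+y, b) ∈ R with b ∈ V'; also (-x+y, -f x + f y) ∈ R
      have h2 : ((-x + y : (dom R)).1, -(f x.1) + f y.1) ∈ R := by
        have := R.add_mem (R.neg_mem hx) hy
        simpa using this
      have := R.sub_mem h2 hR
      have hco : -(f x.1) + f y.1 - b ∈ coker R := by
        rw [mem_coker]
        convert this using 1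
        ext <;> simp
      have : -(f x.1) + f y.1 = b + (-(f x.1) + f y.1 - b) := by abel
      rw [this]
      exact V'.add_mem hb (AddSubgroup.mem_sup.mpr ⟨0, V.zero_mem, _, hco, by simp⟩)
    · intro hv
      refine ⟨-(f x.1) + f y.1, hv, ?_⟩
      have := R.add_mem (R.neg_mem hx) hy
      simpa using this
  haveI : Finite (H ⧸ V') := V'.finite_quotient_of_finiteIndex
  have hNfin : Finite ((dom R) ⧸ N) := by
    have hconst : ∀ x y : (dom R), (QuotientAddGroup.leftRel N).r x y →
        (QuotientAddGroup.mk (f x.1) : H ⧸ V') = QuotientAddGroup.mk (f y.1) := by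
      intro x y hxy
      rw [QuotientAddGroup.leftRel_apply] at hxy
      have : (-x + y : (dom R)).1 ∈ W := hxy
      rw [QuotientAddGroup.eq]
      exact (key x y).mp this
    refine Finite.of_injective (Quotient.lift (fun x : (dom R) =>
      (QuotientAddGroup.mk (f x.1) : H ⧸ V')) hconst) ?_
    intro q q'
    induction q using Quotient.ind
    induction q' using Quotient.ind
    rename_i x y
    intro h
    simp only [Quotient.lift_mk] at h
    have hv : -(f x.1) + f y.1 ∈ V' := QuotientAddGroup.eq.mp h
    exact Quotient.sound (QuotientAddGroup.leftRel_apply.mpr ((key x y).mpr hv))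
  have hrel : W.relIndex (dom R) ≠ 0 := by
    haveI := hNfin
    exact AddSubgroup.index_ne_zero_of_finite
  refine ⟨?_⟩
  rw [← AddSubgroup.relIndex_mul_index hWle]
  exact Nat.mul_ne_zero hrel hd.index_ne_zero

end Helpers2
section EqOn

variable {G H K : Type*} [AddCommGroup G] [AddCommGroup H] [AddCommGroup K]

/-- The fattened restriction of a relation. -/
def fat (R : AddSubgroup (G × H)) (G₁ : AddSubgroup G) (F : AddSubgroup H) :
    AddSubgroup (G × H) :=
  relAdd (R ⊓ G₁.prod ⊤) (G₁.prod F)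

lemma mem_fat {R : AddSubgroup (G × H)} {G₁ : AddSubgroup G} {F : AddSubgroup H} {p : G × H} :
    p ∈ fat R G₁ F ↔ p.1 ∈ G₁ ∧ ∃ b f, (p.1, b) ∈ R ∧ f ∈ F ∧ p.2 = b + f := by
  constructor
  · rintro ⟨b, f, ⟨hbR, hb1, -⟩, ⟨hf1, hfF⟩, hp⟩
    exact ⟨hb1, b, f, hbR, hfF, hp⟩
  · rintro ⟨h1, b, f, hbR, hfF, hp⟩
    exact ⟨b, f, ⟨hbR, h1, trivial⟩, ⟨h1, hfF⟩, hp⟩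

lemma mem_fat' {R : AddSubgroup (G × H)} {G₁ : AddSubgroup G} {F : AddSubgroup H}
    {a : G} {c : H} (h1 : a ∈ G₁) {b f : H} (hbR : (a, b) ∈ R) (hfF : f ∈ F)
    (hp : c = b + f) : (a, c) ∈ fat R G₁ F :=
  mem_fat.mpr ⟨h1, b, f, hbR, hfF, hp⟩

lemma relEquiv_def {R R' : AddSubgroup (G × H)} :
    relEquiv R R' ↔ ∃ (G₁ : AddSubgroup G) (F : AddSubgroup H), G₁.FiniteIndex ∧
      ((F : Set H)).Finite ∧ fat R G₁ F = fat R' G₁ F :=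
  Iff.rfl

lemma fat_mono_left {R R' : AddSubgroup (G × H)} {G₁ : AddSubgroup G} {F : AddSubgroup H}
    (h : R ≤ R') : fat R G₁ F ≤ fat R' G₁ F := by
  rintro ⟨a, c⟩ hm
  rw [mem_fat] at hm ⊢
  obtain ⟨h1, b, f, hbR, hfF, hp⟩ := hm
  exact ⟨h1, b, f, h hbR, hfF, hp⟩

/-- Monotonicity: an equality of fattenings descends to smaller `G₁` and bigger `F`. -/
lemma fat_eq_mono {R R' : AddSubgroup (G × H)} {G₁ G₀ : AddSubgroup G} {F F' : AddSubgroup H}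
    (hG : G₀ ≤ G₁) (hF : F ≤ F') (h : fat R G₁ F = fat R' G₁ F) :
    fat R G₀ F' = fat R' G₀ F' := by
  have key : ∀ {A B : AddSubgroup (G × H)}, fat A G₁ F = fat B G₁ F →
      fat A G₀ F' ≤ fat B G₀ F' := by
    intro A B hAB
    rintro ⟨a, c⟩ hm
    rw [mem_fat] at hm
    obtain ⟨h0, b, f, hbA, hfF, rfl⟩ := hm
    have : (a, b) ∈ fat A G₁ F := mem_fat' (hG h0) hbA F.zero_mem (by simp)
    rw [hAB, mem_fat] at this
    obtain ⟨-, b', f', hbB, hfF', hp⟩ := this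
    refine mem_fat' h0 hbB (F'.add_mem (hF hfF') hfF) ?_
    simp only at hp
    rw [hp]; abel
  exact le_antisymm (key h) (key h.symm)

lemma relEquiv_refl (R : AddSubgroup (G × H)) : relEquiv R R :=
  ⟨⊤, ⊥, inferInstance, by simp, rfl⟩

lemma relEquiv_symm {R R' : AddSubgroup (G × H)} (h : relEquiv R R') : relEquiv R' R := by
  obtain ⟨G₁, F, h1, h2, h3⟩ := h
  exact ⟨G₁, F, h1, h2, h3.symm⟩

lemma relEquiv_trans {R R' R'' : AddSubgroup (G × H)} (h : relEquiv R R')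
    (h' : relEquiv R' R'') : relEquiv R R'' := by
  obtain ⟨G₁, F₁, h1, h2, h3⟩ := h
  obtain ⟨G₂, F₂, h1', h2', h3'⟩ := h'
  refine ⟨G₁ ⊓ G₂, F₁ ⊔ F₂, inferInstance, finite_sup h2 h2', ?_⟩
  exact (fat_eq_mono inf_le_left le_sup_left h3).trans
    (fat_eq_mono inf_le_right le_sup_right h3')

lemma relEquiv_of_eq {R R' : AddSubgroup (G × H)} (h : R = R') : relEquiv R R' :=
  h ▸ relEquiv_refl R

end EqOn
section Quasi

variable {G H K : Type*} [AddCommGroup G] [AddCommGroup H] [AddCommGroup K]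

lemma quasi_add {R S : AddSubgroup (G × H)} (hR : IsQuasiHom R) (hS : IsQuasiHom S) :
    IsQuasiHom (relAdd R S) := by
  obtain ⟨hRd, hRc⟩ := hR
  obtain ⟨hSd, hSc⟩ := hS
  constructor
  · haveI := hRd; haveI := hSd
    refine AddSubgroup.finiteIndex_of_le (K := dom (relAdd R S)) (H := dom R ⊓ dom S) ?_
    rintro a ⟨ha1, ha2⟩
    obtain ⟨b, hb⟩ := mem_dom.mp ha1
    obtain ⟨b', hb'⟩ := mem_dom.mp ha2
    exact mem_dom.mpr ⟨b + b', b, b', hb, hb', rfl⟩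
  · refine (hRc.add hSc).subset ?_
    rintro c ⟨b, b', hb, hb', hc⟩
    exact ⟨b, hb, b', hb', hc.symm⟩

lemma coker_relComp_subset {S : AddSubgroup (H × K)} {R : AddSubgroup (G × H)} :
    (coker (relComp S R) : Set K) ⊆ (img (S ⊓ (coker R).prod ⊤) : Set K) := by
  rintro c hc
  obtain ⟨b, hbR, hbS⟩ := mem_coker.mp hc
  exact mem_img.mpr ⟨b, hbS, mem_coker.mpr hbR, trivial⟩

lemma finite_img_inf_coker {S : AddSubgroup (H × K)} {Cf : AddSubgroup H}
    (hCf : (Cf : Set H).Finite) (hSc : (coker S : Set K).Finite) :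
    (img (S ⊓ Cf.prod ⊤) : Set K).Finite := by
  refine finite_img_of_dom_coker ?_ ?_
  · refine hCf.subset ?_
    rintro a ha
    obtain ⟨b, hb, hb2, -⟩ := mem_dom.mp ha
    exact hb2
  · refine hSc.subset ?_
    rintro c hc
    obtain ⟨h1, -⟩ := mem_coker.mp hc
    exact mem_coker.mpr h1

lemma quasi_comp {S : AddSubgroup (H × K)} {R : AddSubgroup (G × H)}
    (hS : IsQuasiHom S) (hR : IsQuasiHom R) : IsQuasiHom (relComp S R) := by
  obtain ⟨hRd, hRc⟩ := hR
  obtain ⟨hSd, hSc⟩ := hS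
  constructor
  · haveI := preim_finiteIndex hRd hRc hSd
    refine AddSubgroup.finiteIndex_of_le (H := preim R (dom S)) ?_
    rintro a ⟨b, hbD, hbR⟩
    obtain ⟨c, hc⟩ := mem_dom.mp hbD
    exact mem_dom.mpr ⟨c, b, hbR, hc⟩
  · exact (finite_img_inf_coker hRc hSc).subset coker_relComp_subset

lemma dom_relNeg {R : AddSubgroup (G × H)} : dom (relNeg R) = dom R := by
  ext a
  simp only [mem_dom, mem_relNeg]
  exact ⟨fun ⟨b, h⟩ => ⟨-b, h⟩, fun ⟨b, h⟩ => ⟨-b, by simpa using h⟩⟩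

lemma quasi_neg {R : AddSubgroup (G × H)} (hR : IsQuasiHom R) : IsQuasiHom (relNeg R) := by
  obtain ⟨hRd, hRc⟩ := hR
  refine ⟨by rw [dom_relNeg]; exact hRd, ?_⟩
  refine (hRc.image (fun x => -x)).subset ?_
  rintro c hc
  exact ⟨-c, mem_coker.mpr (mem_relNeg.mp hc), by simp⟩

lemma coker_relZero : coker (relZero G) = ⊥ := by
  ext b
  simp [mem_coker, mem_relZero]

lemma quasi_zero : IsQuasiHom (relZero G) := by
  constructor
  · refine ⟨?_⟩
    have : dom (relZero G) = ⊤ := by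
      ext a; simp only [AddSubgroup.mem_top, iff_true, mem_dom]
      exact ⟨0, mem_relZero.mpr rfl⟩
    rw [this, AddSubgroup.index_top]
    exact one_ne_zero
  · rw [coker_relZero]
    simp

lemma quasi_one : IsQuasiHom (relId (⊤ : AddSubgroup G)) := by
  constructor
  · refine ⟨?_⟩
    have : dom (relId (⊤ : AddSubgroup G)) = ⊤ := by
      ext a; simp only [AddSubgroup.mem_top, iff_true, mem_dom]
      exact ⟨a, mem_relId.mpr ⟨trivial, rfl⟩⟩
    rw [this, AddSubgroup.index_top]
    exact one_ne_zero
  · have : coker (relId (⊤ : AddSubgroup G)) = ⊥ := by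
      ext b
      simp only [mem_coker, mem_relId, AddSubgroup.mem_bot]
      constructor
      · rintro ⟨-, h⟩; exact h
      · rintro rfl; exact ⟨trivial, rfl⟩
    rw [this]; simp

end Quasi

section ExactLaws

variable {G H K L : Type*} [AddCommGroup G] [AddCommGroup H] [AddCommGroup K] [AddCommGroup L]

lemma relAdd_comm (R S : AddSubgroup (G × H)) : relAdd R S = relAdd S R := by
  ext ⟨a, c⟩
  constructor
  · rintro ⟨b, b', hb, hb', rfl⟩; exact ⟨b', b, hb', hb, by simp; abel⟩
  · rintro ⟨b, b', hb, hb', rfl⟩; exact ⟨b', b, hb', hb, by simp; abel⟩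

lemma relAdd_assoc (R S T : AddSubgroup (G × H)) :
    relAdd (relAdd R S) T = relAdd R (relAdd S T) := by
  ext ⟨a, c⟩
  constructor
  · rintro ⟨x, b3, ⟨b1, b2, hb1, hb2, rfl⟩, hb3, rfl⟩
    exact ⟨b1, b2 + b3, hb1, ⟨b2, b3, hb2, hb3, rfl⟩, by simp; abel⟩
  · rintro ⟨b1, x, hb1, ⟨b2, b3, hb2, hb3, rfl⟩, rfl⟩
    exact ⟨b1 + b2, b3, ⟨b1, b2, hb1, hb2, rfl⟩, hb3, by simp; abel⟩

lemma relAdd_zero_left (R : AddSubgroup (G × G)) : relAdd (relZero G) R = R := by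
  ext ⟨a, c⟩
  constructor
  · rintro ⟨b, b', hb, hb', rfl⟩
    have : b = 0 := mem_relZero.mp hb
    simpa [this] using hb'
  · intro h
    exact ⟨0, c, mem_relZero.mpr rfl, h, by simp⟩

lemma relComp_assoc (T : AddSubgroup (K × L)) (S : AddSubgroup (H × K))
    (R : AddSubgroup (G × H)) : relComp T (relComp S R) = relComp (relComp T S) R := by
  ext ⟨a, d⟩
  constructor
  · rintro ⟨c, ⟨b, hb, hc⟩, hd⟩
    exact ⟨b, hb, c, hc, hd⟩
  · rintro ⟨b, hb, c, hc, hd⟩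
    exact ⟨c, ⟨b, hb, hc⟩, hd⟩

lemma relComp_id_left (R : AddSubgroup (G × G)) :
    relComp (relId (⊤ : AddSubgroup G)) R = R := by
  ext ⟨a, c⟩
  constructor
  · rintro ⟨b, hb, hid⟩
    obtain ⟨-, h⟩ := mem_relId.mp hid
    simp only at h
    rwa [h]
  · intro h
    exact ⟨c, h, mem_relId.mpr ⟨trivial, rfl⟩⟩

lemma relComp_id_right (R : AddSubgroup (G × G)) :
    relComp R (relId (⊤ : AddSubgroup G)) = R := by
  ext ⟨a, c⟩
  constructor
  · rintro ⟨b, hid, hb⟩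
    obtain ⟨-, h⟩ := mem_relId.mp hid
    simp only at h
    rwa [← h]
  · intro h
    exact ⟨a, mem_relId.mpr ⟨trivial, rfl⟩, h⟩

lemma relComp_zero_left (R : AddSubgroup (G × G)) :
    relComp (relZero G) R = (dom R).prod ⊥ := by
  ext ⟨a, c⟩
  simp only [mem_relComp, AddSubgroup.mem_prod, AddSubgroup.mem_bot]
  constructor
  · rintro ⟨b, hb, hz⟩
    exact ⟨mem_dom.mpr ⟨b, hb⟩, mem_relZero.mp hz⟩
  · rintro ⟨ha, rfl⟩
    obtain ⟨b, hb⟩ := mem_dom.mp ha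
    exact ⟨b, hb, mem_relZero.mpr rfl⟩

lemma relComp_zero_right (R : AddSubgroup (G × G)) :
    relComp R (relZero G) = (⊤ : AddSubgroup G).prod (coker R) := by
  ext ⟨a, c⟩
  simp only [mem_relComp, AddSubgroup.mem_prod, AddSubgroup.mem_top, true_and]
  constructor
  · rintro ⟨b, hz, hb⟩
    have : b = 0 := mem_relZero.mp hz
    rw [this] at hb
    exact mem_coker.mpr hb
  · intro h
    exact ⟨0, mem_relZero.mpr rfl, mem_coker.mp h⟩

lemma relAdd_neg (R : AddSubgroup (G × H)) :
    relAdd (relNeg R) R = (dom R).prod (coker R) := by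
  ext ⟨a, c⟩
  simp only [mem_relAdd, AddSubgroup.mem_prod]
  constructor
  · rintro ⟨b, b', hb, hb', rfl⟩
    rw [mem_relNeg] at hb
    refine ⟨mem_dom.mpr ⟨b', hb'⟩, mem_coker.mpr ?_⟩
    have := R.sub_mem hb' hb
    rwa [show ((a, b') - ((a, b).1, -(a, b).2)) = ((0 : G), b + b') from
      by ext <;> simp <;> abel] at this
  · rintro ⟨ha, hc⟩
    obtain ⟨b, hb⟩ := mem_dom.mp ha
    refine ⟨-b, b + c, mem_relNeg.mpr (by simpa using hb), ?_, by show c = -b + (b + c); abel⟩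
    have := R.add_mem hb (mem_coker.mp hc)
    simpa using this

end ExactLaws
section Compat

variable {G H K : Type*} [AddCommGroup G] [AddCommGroup H] [AddCommGroup K]

lemma relEquiv_prod_zero {D C : AddSubgroup G} (hD : D.FiniteIndex)
    (hC : (C : Set G).Finite) : relEquiv (D.prod C) (relZero G) := by
  refine ⟨D, C, hD, hC, ?_⟩
  have h1 : fat (D.prod C) D C = D.prod C := by
    ext ⟨a, c⟩
    rw [mem_fat]
    constructor
    · rintro ⟨h1, b, f, ⟨-, hbC⟩, hfC, rfl⟩
      exact ⟨h1, C.add_mem hbC hfC⟩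
    · rintro ⟨h1, h2⟩
      exact ⟨h1, c, 0, ⟨h1, h2⟩, C.zero_mem, by simp⟩
  have h2 : fat (relZero G) D C = D.prod C := by
    ext ⟨a, c⟩
    rw [mem_fat]
    constructor
    · rintro ⟨h1, b, f, hb, hfC, rfl⟩
      have : b = 0 := mem_relZero.mp hb
      exact ⟨h1, by simpa [this] using hfC⟩
    · rintro ⟨h1, h2⟩
      exact ⟨h1, 0, c, mem_relZero.mpr rfl, h2, by simp⟩
  show fat (D.prod C) D C = fat (relZero G) D C
  rw [h1, h2]

lemma relEquiv_add_compat {R R' S S' : AddSubgroup (G × H)}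
    (h : relEquiv R R') (h' : relEquiv S S') :
    relEquiv (relAdd R S) (relAdd R' S') := by
  obtain ⟨G₁, F₁, hG₁, hF₁, he₁⟩ := h
  obtain ⟨G₂, F₂, hG₂, hF₂, he₂⟩ := h'
  haveI := hG₁; haveI := hG₂
  refine ⟨G₁ ⊓ G₂, F₁ ⊔ F₂, inferInstance, finite_sup hF₁ hF₂, ?_⟩
  set G₀ := G₁ ⊓ G₂
  set F₀ := F₁ ⊔ F₂
  have e₁ : fat R G₀ F₀ = fat R' G₀ F₀ := fat_eq_mono inf_le_left le_sup_left he₁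
  have e₂ : fat S G₀ F₀ = fat S' G₀ F₀ := fat_eq_mono inf_le_right le_sup_right he₂
  have key : ∀ {A A' B B' : AddSubgroup (G × H)}, fat A G₀ F₀ = fat A' G₀ F₀ →
      fat B G₀ F₀ = fat B' G₀ F₀ →
      fat (relAdd A B) G₀ F₀ ≤ fat (relAdd A' B') G₀ F₀ := by
    intro A A' B B' eA eB
    rintro ⟨a, c⟩ hm
    rw [mem_fat] at hm
    obtain ⟨h0, x, f, ⟨b1, b2, hb1, hb2, rfl⟩, hfF, rfl⟩ := hm
    have m1 : (a, b1) ∈ fat A G₀ F₀ := mem_fat' h0 hb1 F₀.zero_mem (by simp)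
    have m2 : (a, b2) ∈ fat B G₀ F₀ := mem_fat' h0 hb2 F₀.zero_mem (by simp)
    rw [eA, mem_fat] at m1
    rw [eB, mem_fat] at m2
    obtain ⟨-, b1', f1, hb1', hf1, hp1⟩ := m1
    obtain ⟨-, b2', f2, hb2', hf2, hp2⟩ := m2
    simp only at hp1 hp2
    refine mem_fat' h0 (show (a, b1' + b2') ∈ relAdd A' B' from ⟨b1', b2', hb1', hb2', rfl⟩)
      (F₀.add_mem (F₀.add_mem hf1 hf2) hfF) ?_
    simp only [hp1, hp2]
    abel
  exact le_antisymm (key e₁ e₂) (key e₁.symm e₂.symm)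

/-- Compatibility of composition in the right argument. -/
lemma relEquiv_comp_right {S : AddSubgroup (G × G)} {R R' : AddSubgroup (G × G)}
    (hS : IsQuasiHom S) (hR : IsQuasiHom R) (hR' : IsQuasiHom R')
    (h : relEquiv R R') : relEquiv (relComp S R) (relComp S R') := by
  classical
  obtain ⟨G₁, F₁, hG₁, hF₁, he⟩ := h
  obtain ⟨hSd, hSc⟩ := hS
  haveI := hG₁
  haveI : (preim R (dom S)).FiniteIndex := preim_finiteIndex hR.1 hR.2 hSd
  haveI : (preim R' (dom S)).FiniteIndex := preim_finiteIndex hR'.1 hR'.2 hSd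
  set K : AddSubgroup G := F₁ ⊔ (coker R ⊔ coker R') with hK
  have hKfin : (K : Set G).Finite := finite_sup hF₁ (finite_sup hR.2 hR'.2)
  set G₀ : AddSubgroup G := G₁ ⊓ (preim R (dom S) ⊓ preim R' (dom S)) with hG₀
  set F₀ : AddSubgroup G := img (S ⊓ K.prod ⊤) with hF₀
  have hF₀fin : (F₀ : Set G).Finite := finite_img_inf_coker hKfin hSc
  refine ⟨G₀, F₀, inferInstance, hF₀fin, ?_⟩
  have key : ∀ {A B : AddSubgroup (G × G)}, fat A G₁ F₁ = fat B G₁ F₁ →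
      (G₀ ≤ preim B (dom S)) → coker B ≤ K →
      fat (relComp S A) G₀ F₀ ≤ fat (relComp S B) G₀ F₀ := by
    intro A B eAB hpre hcokB
    rintro ⟨a, c⟩ hm
    rw [mem_fat] at hm
    obtain ⟨h0, x, f0, ⟨b, hbA, hbS⟩, hf0, rfl⟩ := hm
    simp only at hbA hbS h0 hf0 ⊢
    -- b̃ : value of B at a inside dom S
    obtain ⟨bt, hbtD, hbtB⟩ := mem_preim.mp (hpre h0)
    obtain ⟨c', hc'⟩ := mem_dom.mp hbtD
    -- relate b and bt
    have h0G₁ : a ∈ G₁ := (AddSubgroup.mem_inf.mp h0).1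
    have hmb : (a, b) ∈ fat A G₁ F₁ := mem_fat' h0G₁ hbA F₁.zero_mem (by simp)
    rw [eAB, mem_fat] at hmb
    obtain ⟨-, b1, f1, hb1B, hf1, hp1⟩ := hmb
    simp only at hp1 hb1B
    -- b - bt ∈ K
    have hdiff : b - bt ∈ K := by
      have hcok : b1 - bt ∈ coker B := by
        rw [mem_coker]
        have := B.sub_mem hb1B hbtB
        simpa using this
      have heq : b - bt = f1 + (b1 - bt) := by rw [hp1]; abel
      rw [heq]
      exact K.add_mem (le_sup_left (a := F₁) hf1) (hcokB hcok)
    -- (b - bt, x - c') ∈ S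
    have hSdiff : (b - bt, x - c') ∈ S := by
      have := S.sub_mem hbS hc'
      simpa using this
    have hcF : x - c' ∈ F₀ := mem_img.mpr
      ⟨b - bt, AddSubgroup.mem_inf.mpr ⟨hSdiff, AddSubgroup.mem_prod.mpr ⟨hdiff, trivial⟩⟩⟩
    refine mem_fat' h0 (show (a, c') ∈ relComp S B from ⟨bt, hbtB, hc'⟩)
      (F₀.add_mem hcF hf0) ?_
    show x + f0 = c' + (x - c' + f0)
    abel
  have hpreR : G₀ ≤ preim R (dom S) := le_trans inf_le_right inf_le_left
  have hpreR' : G₀ ≤ preim R' (dom S) := le_trans inf_le_right inf_le_right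
  have hcR : coker R ≤ K := le_trans le_sup_left le_sup_right
  have hcR' : coker R' ≤ K := le_trans le_sup_right le_sup_right
  exact le_antisymm (key he hpreR' hcR') (key he.symm hpreR hcR)

end Compat
section Compat2

variable {G : Type*} [AddCommGroup G]

/-- Compatibility of composition in the left argument. -/
lemma relEquiv_comp_left {S S' R : AddSubgroup (G × G)}
    (hS : IsQuasiHom S) (hS' : IsQuasiHom S') (hR : IsQuasiHom R)
    (h : relEquiv S S') : relEquiv (relComp S R) (relComp S' R) := by
  obtain ⟨G₂, F₂, hG₂, hF₂, he⟩ := h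
  haveI := hG₂
  set V : AddSubgroup G := G₂ ⊓ (dom S ⊓ dom S') with hV
  haveI : V.FiniteIndex := by
    haveI := hS.1; haveI := hS'.1
    infer_instance
  haveI : (preim R V).FiniteIndex := preim_finiteIndex hR.1 hR.2 inferInstance
  set G₀ : AddSubgroup G := preim R V with hG₀
  set F₀ : AddSubgroup G :=
    F₂ ⊔ (img (S ⊓ (coker R).prod ⊤) ⊔ img (S' ⊓ (coker R).prod ⊤)) with hF₀
  have hF₀fin : (F₀ : Set G).Finite :=
    finite_sup hF₂ (finite_sup (finite_img_inf_coker hR.2 hS.2)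
      (finite_img_inf_coker hR.2 hS'.2))
  refine ⟨G₀, F₀, inferInstance, hF₀fin, ?_⟩
  have key : ∀ {A B : AddSubgroup (G × G)}, fat A G₂ F₂ = fat B G₂ F₂ →
      V ≤ dom A → img (A ⊓ (coker R).prod ⊤) ≤ F₀ →
      fat (relComp A R) G₀ F₀ ≤ fat (relComp B R) G₀ F₀ := by
    intro A B eAB hVA hAF
    rintro ⟨a, c⟩ hm
    rw [mem_fat] at hm
    obtain ⟨h0, x, f0, ⟨b, hbR, hbA⟩, hf0, rfl⟩ := hm
    simp only at hbR hbA h0 hf0 ⊢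
    obtain ⟨bt, hbtV, hbtR⟩ := mem_preim.mp h0
    obtain ⟨ct, hct⟩ := mem_dom.mp (hVA hbtV)
    have hbtG₂ : bt ∈ G₂ := (AddSubgroup.mem_inf.mp hbtV).1
    have hmc : (bt, ct) ∈ fat A G₂ F₂ := mem_fat' hbtG₂ hct F₂.zero_mem (by simp)
    rw [eAB, mem_fat] at hmc
    obtain ⟨-, c', f2, hc'B, hf2, hp⟩ := hmc
    simp only at hp hc'B
    -- (b - bt, x - ct) ∈ A with b - bt ∈ coker R
    have hcok : b - bt ∈ coker R := by
      rw [mem_coker]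
      have := R.sub_mem hbR hbtR
      simpa using this
    have hAd : (b - bt, x - ct) ∈ A := by
      have := A.sub_mem hbA hct
      simpa using this
    have hxF : x - ct ∈ F₀ := hAF (mem_img.mpr ⟨b - bt,
      AddSubgroup.mem_inf.mpr ⟨hAd, AddSubgroup.mem_prod.mpr ⟨hcok, trivial⟩⟩⟩)
    refine mem_fat' h0 (show (a, c') ∈ relComp B R from ⟨bt, hbtR, hc'B⟩)
      (F₀.add_mem (F₀.add_mem (le_sup_left (a := F₂) hf2) hxF) hf0) ?_
    show x + f0 = c' + (f2 + (x - ct) + f0)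
    rw [hp]
    abel
  have hVS : V ≤ dom S := le_trans inf_le_right inf_le_left
  have hVS' : V ≤ dom S' := le_trans inf_le_right inf_le_right
  have hSF : img (S ⊓ (coker R).prod ⊤) ≤ F₀ := le_trans le_sup_left le_sup_right
  have hSF' : img (S' ⊓ (coker R).prod ⊤) ≤ F₀ := le_trans le_sup_right le_sup_right
  exact le_antisymm (key he hVS hSF) (key he.symm hVS' hSF')

lemma relEquiv_comp_compat {S S' R R' : AddSubgroup (G × G)}
    (hS : IsQuasiHom S) (hS' : IsQuasiHom S') (hR : IsQuasiHom R) (hR' : IsQuasiHom R')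
    (h : relEquiv S S') (h' : relEquiv R R') :
    relEquiv (relComp S R) (relComp S' R') :=
  relEquiv_trans (relEquiv_comp_left hS hS' hR h)
    (relEquiv_comp_right hS' hR hR' h')

lemma relEquiv_left_distrib {S R T : AddSubgroup (G × G)}
    (hS : IsQuasiHom S) (hR : IsQuasiHom R) (hT : IsQuasiHom T) :
    relEquiv (relComp S (relAdd R T)) (relAdd (relComp S R) (relComp S T)) := by
  haveI := hS.1
  haveI : (preim R (dom S)).FiniteIndex := preim_finiteIndex hR.1 hR.2 hS.1
  haveI : (preim T (dom S)).FiniteIndex := preim_finiteIndex hT.1 hT.2 hS.1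
  set K : AddSubgroup G := coker R ⊔ coker T with hK
  have hKfin : (K : Set G).Finite := finite_sup hR.2 hT.2
  set G₀ : AddSubgroup G := preim R (dom S) ⊓ preim T (dom S) with hG₀
  set F₀ : AddSubgroup G := img (S ⊓ K.prod ⊤) with hF₀
  refine ⟨G₀, F₀, inferInstance, finite_img_inf_coker hKfin hS.2, ?_⟩
  show fat (relComp S (relAdd R T)) G₀ F₀ = fat (relAdd (relComp S R) (relComp S T)) G₀ F₀
  refine le_antisymm ?_ (fat_mono_left ?_)
  · rintro ⟨a, c⟩ hm
    rw [mem_fat] at hm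
    obtain ⟨h0, x, f0, ⟨b, ⟨b1, b2, hb1, hb2, rfl⟩, hbS⟩, hf0, rfl⟩ := hm
    simp only at hb1 hb2 hbS h0 hf0 ⊢
    obtain ⟨bt1, hbt1D, hbt1R⟩ := mem_preim.mp (AddSubgroup.mem_inf.mp h0).1
    obtain ⟨bt2, hbt2D, hbt2T⟩ := mem_preim.mp (AddSubgroup.mem_inf.mp h0).2
    obtain ⟨c1, hc1⟩ := mem_dom.mp hbt1D
    obtain ⟨c2, hc2⟩ := mem_dom.mp hbt2D
    have hdiff : (b1 + b2) - (bt1 + bt2) ∈ K := by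
      have h1 : b1 - bt1 ∈ coker R := by
        rw [mem_coker]; have := R.sub_mem hb1 hbt1R; simpa using this
      have h2 : b2 - bt2 ∈ coker T := by
        rw [mem_coker]; have := T.sub_mem hb2 hbt2T; simpa using this
      have : (b1 + b2) - (bt1 + bt2) = (b1 - bt1) + (b2 - bt2) := by abel
      rw [this]
      exact K.add_mem (le_sup_left (a := coker R) h1) (le_sup_right (b := coker T) h2)
    have hSd : ((b1 + b2) - (bt1 + bt2), x - (c1 + c2)) ∈ S := by
      have := S.sub_mem hbS (S.add_mem hc1 hc2)
      simpa using this
    have hxF : x - (c1 + c2) ∈ F₀ := mem_img.mpr ⟨_,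
      AddSubgroup.mem_inf.mpr ⟨hSd, AddSubgroup.mem_prod.mpr ⟨hdiff, trivial⟩⟩⟩
    refine mem_fat' h0 (show (a, c1 + c2) ∈ relAdd (relComp S R) (relComp S T) from
      ⟨c1, c2, ⟨bt1, hbt1R, hc1⟩, ⟨bt2, hbt2T, hc2⟩, rfl⟩)
      (F₀.add_mem hxF hf0) ?_
    show x + f0 = (c1 + c2) + (x - (c1 + c2) + f0)
    abel
  · -- exact inclusion RHS ≤ LHS
    rintro ⟨a, c⟩ ⟨c1, c2, ⟨b1, hb1, hc1⟩, ⟨b2, hb2, hc2⟩, rfl⟩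
    exact ⟨b1 + b2, ⟨b1, b2, hb1, hb2, rfl⟩, by simpa using S.add_mem hc1 hc2⟩

lemma relEquiv_right_distrib {S T R : AddSubgroup (G × G)}
    (hS : IsQuasiHom S) (hT : IsQuasiHom T) (hR : IsQuasiHom R) :
    relEquiv (relComp (relAdd S T) R) (relAdd (relComp S R) (relComp T R)) := by
  haveI := hS.1; haveI := hT.1
  haveI : (preim R (dom S ⊓ dom T)).FiniteIndex :=
    preim_finiteIndex hR.1 hR.2 inferInstance
  set G₀ : AddSubgroup G := preim R (dom S ⊓ dom T) with hG₀
  set F₀ : AddSubgroup G :=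
    img (S ⊓ (coker R).prod ⊤) ⊔ img (T ⊓ (coker R).prod ⊤) with hF₀
  have hF₀fin : (F₀ : Set G).Finite :=
    finite_sup (finite_img_inf_coker hR.2 hS.2) (finite_img_inf_coker hR.2 hT.2)
  refine ⟨G₀, F₀, inferInstance, hF₀fin, ?_⟩
  show fat (relComp (relAdd S T) R) G₀ F₀ = fat (relAdd (relComp S R) (relComp T R)) G₀ F₀
  refine le_antisymm (fat_mono_left ?_) ?_
  · -- exact inclusion LHS ≤ RHS
    rintro ⟨a, c⟩ ⟨b, hb, c1, c2, hc1, hc2, rfl⟩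
    exact ⟨c1, c2, ⟨b, hb, hc1⟩, ⟨b, hb, hc2⟩, rfl⟩
  · rintro ⟨a, c⟩ hm
    rw [mem_fat] at hm
    obtain ⟨h0, x, f0, ⟨c1, c2, ⟨b1, hb1R, hc1S⟩, ⟨b2, hb2R, hc2T⟩, rfl⟩, hf0, rfl⟩ := hm
    simp only at hb1R hc1S hb2R hc2T h0 hf0 ⊢
    obtain ⟨bt, hbtD, hbtR⟩ := mem_preim.mp h0
    obtain ⟨ct1, hct1⟩ := mem_dom.mp (AddSubgroup.mem_inf.mp hbtD).1
    obtain ⟨ct2, hct2⟩ := mem_dom.mp (AddSubgroup.mem_inf.mp hbtD).2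
    have hd1 : c1 - ct1 ∈ img (S ⊓ (coker R).prod ⊤) := by
      refine mem_img.mpr ⟨b1 - bt, AddSubgroup.mem_inf.mpr ⟨?_, AddSubgroup.mem_prod.mpr ⟨?_, trivial⟩⟩⟩
      · have := S.sub_mem hc1S hct1; simpa using this
      · rw [mem_coker]; have := R.sub_mem hb1R hbtR; simpa using this
    have hd2 : c2 - ct2 ∈ img (T ⊓ (coker R).prod ⊤) := by
      refine mem_img.mpr ⟨b2 - bt, AddSubgroup.mem_inf.mpr ⟨?_, AddSubgroup.mem_prod.mpr ⟨?_, trivial⟩⟩⟩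
      · have := T.sub_mem hc2T hct2; simpa using this
      · rw [mem_coker]; have := R.sub_mem hb2R hbtR; simpa using this
    refine mem_fat' h0 (show (a, ct1 + ct2) ∈ relComp (relAdd S T) R from
      ⟨bt, hbtR, ct1, ct2, hct1, hct2, rfl⟩)
      (F₀.add_mem (F₀.add_mem (le_sup_left (a := img (S ⊓ (coker R).prod ⊤)) hd1)
        (le_sup_right (b := img (T ⊓ (coker R).prod ⊤)) hd2)) hf0) ?_
    show c1 + c2 + f0 = (ct1 + ct2) + ((c1 - ct1) + (c2 - ct2) + f0)
    abel

lemma relEquiv_neg_compat {R R' : AddSubgroup (G × G)} (h : relEquiv R R') :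
    relEquiv (relNeg R) (relNeg R') := by
  obtain ⟨G₁, F₁, hG₁, hF₁, he⟩ := h
  refine ⟨G₁, F₁, hG₁, hF₁, ?_⟩
  have key : ∀ {A B : AddSubgroup (G × G)}, fat A G₁ F₁ = fat B G₁ F₁ →
      fat (relNeg A) G₁ F₁ ≤ fat (relNeg B) G₁ F₁ := by
    intro A B eAB
    rintro ⟨a, c⟩ hm
    rw [mem_fat] at hm
    obtain ⟨h0, b, f, hbA, hf, rfl⟩ := hm
    simp only at hbA h0 hf ⊢
    rw [mem_relNeg] at hbA
    have : (a, -b) ∈ fat A G₁ F₁ := mem_fat' h0 hbA F₁.zero_mem (by simp)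
    rw [eAB, mem_fat] at this
    obtain ⟨-, b', f', hb'B, hf', hp⟩ := this
    simp only at hp hb'B
    refine mem_fat' h0 (show (a, -b') ∈ relNeg B from mem_relNeg.mpr (by simpa using hb'B))
      (F₁.add_mem (F₁.neg_mem hf') hf) ?_
    show b + f = -b' + (-f' + f)
    have hb2 : b = -(b' + f') := by
      have := congrArg Neg.neg hp
      simpa using this
    rw [hb2]; abel
  exact le_antisymm (key he) (key he.symm)

end Compat2
section RingCon

variable {G : Type*} [AddCommGroup G]

instance qeSetoid (G : Type*) [AddCommGroup G] : Setoid (QEndo G) :=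
  ⟨fun R S => relEquiv R.1 S.1,
    ⟨fun R => relEquiv_refl _, fun h => relEquiv_symm h, fun h h' => relEquiv_trans h h'⟩⟩

lemma qe_equiv_iff {R S : QEndo G} : R ≈ S ↔ relEquiv R.1 S.1 := Iff.rfl

def qadd (R S : QEndo G) : QEndo G := ⟨relAdd R.1 S.1, quasi_add R.2 S.2⟩

def qmul (S R : QEndo G) : QEndo G := ⟨relComp S.1 R.1, quasi_comp S.2 R.2⟩

def qneg (R : QEndo G) : QEndo G := ⟨relNeg R.1, quasi_neg R.2⟩

def qzero : QEndo G := ⟨relZero G, quasi_zero⟩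

def qone : QEndo G := ⟨relId ⊤, quasi_one⟩

lemma qe_of_eq {R S : QEndo G} (h : R.1 = S.1) : R ≈ S := qe_equiv_iff.mpr (relEquiv_of_eq h)

instance qAddInst (G : Type*) [AddCommGroup G] : Add (Quotient (qeSetoid G)) :=
  ⟨Quotient.map₂ qadd (fun _ _ h _ _ h' => relEquiv_add_compat h h')⟩

instance qZeroInst (G : Type*) [AddCommGroup G] : Zero (Quotient (qeSetoid G)) :=
  ⟨Quotient.mk (qeSetoid G) qzero⟩

instance qNegInst (G : Type*) [AddCommGroup G] : Neg (Quotient (qeSetoid G)) :=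
  ⟨Quotient.map qneg (fun _ _ h => relEquiv_neg_compat h)⟩

instance qMulInst (G : Type*) [AddCommGroup G] : Mul (Quotient (qeSetoid G)) :=
  ⟨Quotient.map₂ qmul (fun S S' h R R' h' => relEquiv_comp_compat S.2 S'.2 R.2 R'.2 h h')⟩

instance qOneInst (G : Type*) [AddCommGroup G] : One (Quotient (qeSetoid G)) :=
  ⟨Quotient.mk (qeSetoid G) qone⟩

instance qRing (G : Type*) [AddCommGroup G] : Ring (Quotient (qeSetoid G)) where
  add := (· + ·)
  zero := 0
  neg := (- ·)
  mul := (· * ·)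
  one := 1
  nsmul := nsmulRec
  zsmul := zsmulRec
  add_assoc := by
    rintro ⟨a⟩ ⟨b⟩ ⟨c⟩
    exact Quotient.sound (qe_of_eq (relAdd_assoc a.1 b.1 c.1))
  zero_add := by
    rintro ⟨a⟩
    exact Quotient.sound (qe_of_eq (relAdd_zero_left a.1))
  add_zero := by
    rintro ⟨a⟩
    exact Quotient.sound (qe_of_eq ((relAdd_comm a.1 (relZero G)).trans (relAdd_zero_left a.1)))
  add_comm := by
    rintro ⟨a⟩ ⟨b⟩
    exact Quotient.sound (qe_of_eq (relAdd_comm a.1 b.1))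
  neg_add_cancel := by
    rintro ⟨a⟩
    refine Quotient.sound (qe_equiv_iff.mpr ?_)
    show relEquiv (relAdd (relNeg a.1) a.1) (relZero G)
    rw [relAdd_neg a.1]
    exact relEquiv_prod_zero a.2.1 a.2.2
  mul_assoc := by
    rintro ⟨a⟩ ⟨b⟩ ⟨c⟩
    exact Quotient.sound (qe_of_eq (relComp_assoc a.1 b.1 c.1).symm)
  one_mul := by
    rintro ⟨a⟩
    exact Quotient.sound (qe_of_eq (relComp_id_left a.1))
  mul_one := by
    rintro ⟨a⟩
    exact Quotient.sound (qe_of_eq (relComp_id_right a.1))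
  left_distrib := by
    rintro ⟨a⟩ ⟨b⟩ ⟨c⟩
    exact Quotient.sound (qe_equiv_iff.mpr (relEquiv_left_distrib a.2 b.2 c.2))
  right_distrib := by
    rintro ⟨a⟩ ⟨b⟩ ⟨c⟩
    exact Quotient.sound (qe_equiv_iff.mpr (relEquiv_right_distrib a.2 b.2 c.2))
  zero_mul := by
    rintro ⟨a⟩
    refine Quotient.sound (qe_equiv_iff.mpr ?_)
    show relEquiv (relComp (relZero G) a.1) (relZero G)
    rw [relComp_zero_left a.1]
    exact relEquiv_prod_zero a.2.1 (by simp)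
  mul_zero := by
    rintro ⟨a⟩
    refine Quotient.sound (qe_equiv_iff.mpr ?_)
    show relEquiv (relComp a.1 (relZero G)) (relZero G)
    rw [relComp_zero_right a.1]
    exact relEquiv_prod_zero inferInstance a.2.2

end RingCon
/-- the quasi-endomorphisms of `G` modulo the equivalence `relEquiv` form an
associative unital ring, with addition induced by `relAdd`, multiplication induced by
composition `relComp`, zero the class of `G × {0}` and one the class of the diagonal. -/
theorem qEndo_ring (G : Type*) [AddCommGroup G] :
    ∃ (s : Setoid (QEndo G)) (ringStr : Ring (Quotient s)),
      (∀ R S : QEndo G, s.r R S ↔ relEquiv R.1 S.1) ∧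
      (∀ R S T : QEndo G, relEquiv T.1 (relAdd R.1 S.1) →
        ringStr.add (Quotient.mk s R) (Quotient.mk s S) = Quotient.mk s T) ∧
      (∀ R S T : QEndo G, relEquiv T.1 (relComp S.1 R.1) →
        ringStr.mul (Quotient.mk s S) (Quotient.mk s R) = Quotient.mk s T) ∧
      (∀ Z : QEndo G, relEquiv Z.1 (relZero G) →
        ringStr.zero = Quotient.mk s Z) ∧
      (∀ I : QEndo G, relEquiv I.1 (relId (⊤ : AddSubgroup G)) →
        ringStr.one = Quotient.mk s I) := by
  refine ⟨qeSetoid G, qRing G, fun R S => Iff.rfl, ?_, ?_, ?_, ?_⟩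
  · intro R S T h
    have h1 : (qRing G).add (Quotient.mk (qeSetoid G) R) (Quotient.mk (qeSetoid G) S) =
        Quotient.mk (qeSetoid G) (qadd R S) := rfl
    rw [h1]
    exact Quotient.sound (qe_equiv_iff.mpr (relEquiv_symm h))
  · intro R S T h
    have h1 : (qRing G).mul (Quotient.mk (qeSetoid G) S) (Quotient.mk (qeSetoid G) R) =
        Quotient.mk (qeSetoid G) (qmul S R) := rfl
    rw [h1]
    exact Quotient.sound (qe_equiv_iff.mpr (relEquiv_symm h))
  · intro Z h
    have h1 : (qRing G).zero = Quotient.mk (qeSetoid G) qzero := rfl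
    rw [h1]
    exact Quotient.sound (qe_equiv_iff.mpr (relEquiv_symm h))
  · intro I h
    have h1 : (qRing G).one = Quotient.mk (qeSetoid G) qone := rfl
    rw [h1]
    exact Quotient.sound (qe_equiv_iff.mpr (relEquiv_symm h))

end QH
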